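/- Let a < b be real numbers and let u : ℝ → ℝ be continuously differentiable. Then for every x ∈ [a, b], u(x)² ≤ 2 (∫_a^b u(y)² dy)^{1/2} (∫_a^b u'(y)² dy)^{1/2} + (b − a)^{-1} ∫_a^b u(y)² dy. -/

import Mathlib

open MeasureTheory intervalIntegral

lemma my_cs (a b : ℝ) (hab : a ≤ b) (f g : ℝ → ℝ) (hf : Continuous f) (hg : Continuous g) :
    ∫ y in a..b, |f y * g y| ≤
      Real.sqrt (∫ y in a..b, (f y)^2) * Real.sqrt (∫ y in a..b, (g y)^2) := by
  have hmem : ∀ (h : ℝ → ℝ), Continuous h →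
      MemLp h (ENNReal.ofReal 2) (volume.restrict (Set.Ioc a b)) := by
    intro h hc
    obtain ⟨C, hC⟩ := (isCompact_Icc (a := a) (b := b)).exists_bound_of_continuousOn
      hc.continuousOn
    haveI : IsFiniteMeasure (volume.restrict (Set.Ioc a b)) :=
      ⟨by rw [Measure.restrict_apply_univ]; exact measure_Ioc_lt_top⟩
    refine MemLp.mono_exponent (q := ⊤) ?_ le_top
    refine memLp_top_of_bound hc.aestronglyMeasurable C ?_
    filter_upwards [ae_restrict_mem measurableSet_Ioc] with x hx
    exact hC x (Set.Ioc_subset_Icc_self hx)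
  have h22 : (2:ℝ).HolderConjugate 2 := by constructor <;> norm_num
  have key := integral_mul_norm_le_Lp_mul_Lq (μ := volume.restrict (Set.Ioc a b))
    h22 (hmem f hf) (hmem g hg)
  rw [intervalIntegral.integral_of_le hab, intervalIntegral.integral_of_le hab,
    intervalIntegral.integral_of_le hab, Real.sqrt_eq_rpow, Real.sqrt_eq_rpow]
  calc ∫ y in Set.Ioc a b, |f y * g y|
      = ∫ y in Set.Ioc a b, ‖f y‖ * ‖g y‖ := by
        simp [abs_mul, Real.norm_eq_abs]
    _ ≤ (∫ y in Set.Ioc a b, ‖f y‖ ^ (2:ℝ)) ^ (1/2:ℝ) *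
        (∫ y in Set.Ioc a b, ‖g y‖ ^ (2:ℝ)) ^ (1/2:ℝ) := key
    _ = (∫ y in Set.Ioc a b, (f y)^2) ^ (1/2:ℝ) *
        (∫ y in Set.Ioc a b, (g y)^2) ^ (1/2:ℝ) := by
        congr 2 <;> refine integral_congr_ae (Filter.Eventually.of_forall fun y => ?_) <;>
          · simp only [Real.norm_eq_abs]
            rw [show (2:ℝ) = ((2:ℕ):ℝ) by norm_num, Real.rpow_natCast, sq_abs]

theorem stmt_8 (a b : ℝ) (hab : a < b) (u : ℝ → ℝ) (hu : ContDiff ℝ 1 u) :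
    ∀ x ∈ Set.Icc a b, (u x)^2 ≤
      2 * Real.sqrt (∫ y in a..b, (u y)^2) * Real.sqrt (∫ y in a..b, (deriv u y)^2)
        + (b - a)⁻¹ * ∫ y in a..b, (u y)^2 := by
  intro x hx
  have hu' : Continuous (deriv u) := hu.continuous_deriv le_rfl
  have huc : Continuous u := hu.continuous
  set g : ℝ → ℝ := fun t => 2 * u t * deriv u t with hg
  have hgc : Continuous g := by continuity
  have hgabs : Continuous fun t => |g t| := hgc.abs
  have hd : ∀ t : ℝ, HasDerivAt (fun s => u s ^ 2) (g t) t := by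
    intro t
    have h := ((hu.differentiable one_ne_zero) t).hasDerivAt.fun_pow 2
    simpa [hg, mul_comm, mul_assoc, mul_left_comm] using h
  set A : ℝ := ∫ t in a..b, |g t| with hA
  have hA0 : 0 ≤ A := intervalIntegral.integral_nonneg hab.le fun t _ => abs_nonneg _
  -- pointwise bound
  have key : ∀ y ∈ Set.Icc a b, u x ^ 2 ≤ u y ^ 2 + A := by
    intro y hy
    have hftc : ∫ t in y..x, g t = u x ^ 2 - u y ^ 2 :=
      intervalIntegral.integral_eq_sub_of_hasDerivAt (fun t _ => hd t)
        (hgc.intervalIntegrable y x)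
    have habs : |∫ t in y..x, g t| ≤ A := by
      rcases le_total y x with h | h
      · calc |∫ t in y..x, g t| ≤ ∫ t in y..x, |g t| :=
              intervalIntegral.abs_integral_le_integral_abs h
          _ ≤ A := intervalIntegral.integral_mono_interval hy.1 h hx.2
              (Filter.Eventually.of_forall fun t => abs_nonneg _)
              (hgabs.intervalIntegrable a b)
      · rw [intervalIntegral.integral_symm, abs_neg]
        calc |∫ t in x..y, g t| ≤ ∫ t in x..y, |g t| :=
              intervalIntegral.abs_integral_le_integral_abs h
          _ ≤ A := intervalIntegral.integral_mono_interval hx.1 h hy.2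
              (Filter.Eventually.of_forall fun t => abs_nonneg _)
              (hgabs.intervalIntegrable a b)
    nlinarith [le_abs_self (∫ t in y..x, g t), hftc]
  -- integrate over y
  have hIint : IntervalIntegrable (fun y => u y ^ 2) volume a b :=
    (huc.pow 2).intervalIntegrable a b
  have hint : (b - a) * u x ^ 2 ≤ (∫ y in a..b, u y ^ 2) + (b - a) * A := by
    have h1 : ∫ (_ : ℝ) in a..b, u x ^ 2 ≤ ∫ y in a..b, (u y ^ 2 + A) := by
      refine intervalIntegral.integral_mono_on hab.le
        (intervalIntegrable_const) (hIint.add intervalIntegrable_const) ?_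
      intro y hy; exact key y hy
    rw [intervalIntegral.integral_const, intervalIntegral.integral_add hIint
      intervalIntegrable_const, intervalIntegral.integral_const] at h1
    simpa [smul_eq_mul, mul_comm] using h1
  have hba : (0:ℝ) < b - a := by linarith
  have hux : u x ^ 2 ≤ A + (b - a)⁻¹ * ∫ y in a..b, u y ^ 2 := by
    rw [← mul_le_mul_iff_right₀ hba, mul_add, ← mul_assoc, mul_inv_cancel₀ hba.ne', one_mul]
    linarith
  -- Cauchy-Schwarz on A
  have hAcs : A ≤ 2 * Real.sqrt (∫ y in a..b, (u y)^2) *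
      Real.sqrt (∫ y in a..b, (deriv u y)^2) := by
    have hA2 : A = 2 * ∫ t in a..b, |u t * deriv u t| := by
      rw [hA, ← intervalIntegral.integral_const_mul]
      refine intervalIntegral.integral_congr fun t _ => ?_
      show |2 * u t * deriv u t| = 2 * |u t * deriv u t|
      rw [mul_assoc, abs_mul, abs_two]
    rw [hA2, mul_assoc]
    have := my_cs a b hab.le u (deriv u) huc hu'
    linarith
  linarith
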